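/- Let k be a field of characteristic p with a fixed separable closure k((u))^sep ⊇ k((u)), and let φ on k((u))^sep extend the p-power Frobenius on k((u))-coefficients combined with u ↦ u^p in the sense of the norm-field setup (φ is the unique Frobenius-semilinear extension). Let (M, Φ) be a d-dimensional étale φ-module over k((u)), i.e., M ≅ k((u))^d with a φ-semilinear bijective Φ = A·φ for A ∈ GL_d(k((u))). Suppose L/k((u)) is a finite separable extension such that the fixed space U = (L ⊗_{k((u))} M)^{Φ ⊗ φ = id} has dimension d over F_p (more precisely over the prime field fixed by Φ). Let 𝔐₀ ⊂ L ⊗ M be the O_L-submodule generated by U. Then 𝔐₀ is an O_L-lattice in L ⊗ M satisfying (A·φ_L)(𝔐₀) generates 𝔐₀, i.e., the induced semilinear map preserves 𝔐₀ with image spanning 𝔐₀. -/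

import Mathlib

open scoped Classical

noncomputable section

/-- An `L`-vector space is a module over the valuation ring `O_L ⊆ L`. -/
noncomputable instance valSubModule {L : Type} [Field L] (O : ValuationSubring L)
    (V : Type) [AddCommGroup V] [Module L V] : Module ↥O V :=
  Module.compHom V (algebraMap ↥O L)

section Aux

variable {p : ℕ} [Fact p.Prime] {L : Type} [Field L] [CharP L p]

lemma fixed_of_pow_eq (x : L) (hx : x ^ p = x) : ∃ a : ZMod p, ((a.val : ℕ) : L) = x := by
  classical
  have hp : p.Prime := Fact.out
  by_contra hcon
  push_neg at hcon
  set e : ZMod p →+* L := ZMod.castHom dvd_rfl L with he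
  set q : Polynomial L := Polynomial.X ^ p - Polynomial.X with hq
  have hdeg : q.natDegree ≤ p := by
    refine le_trans (Polynomial.natDegree_sub_le _ _) ?_
    simp [Polynomial.natDegree_X_pow, Polynomial.natDegree_X, hp.one_lt.le]
  have hqne : q ≠ 0 := by
    intro h
    have h2 := congrArg (fun r => Polynomial.coeff r p) h
    simp [hq, Polynomial.coeff_X_pow, Polynomial.coeff_X, hp.ne_one, Ne.symm hp.ne_one] at h2
  have hroot : ∀ y : L, y ^ p = y → y ∈ q.roots := by
    intro y hy
    rw [Polynomial.mem_roots hqne]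
    simp [hq, Polynomial.IsRoot, hy]
  set s : Finset L := Finset.image e Finset.univ ∪ {x} with hs
  have hsub : s.val ⊆ q.roots := by
    intro y hy
    simp only [hs, Finset.mem_val, Finset.mem_union, Finset.mem_image, Finset.mem_singleton] at hy
    rcases hy with ⟨a, _, rfl⟩ | rfl
    · exact hroot _ (by rw [← map_pow, ZMod.pow_card])
    · exact hroot _ hx
  have hcard : s.card = p + 1 := by
    have hx_not : x ∉ Finset.image e Finset.univ := by
      simp only [Finset.mem_image, Finset.mem_univ, true_and]
      rintro ⟨a, ha⟩
      exact hcon a ((ZMod.natCast_val a).trans ((ZMod.castHom_apply a).symm.trans ha))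
    rw [hs, Finset.union_comm, ← Finset.insert_eq, Finset.card_insert_of_notMem hx_not,
      Finset.card_image_of_injective _ e.injective]
    simp [ZMod.card]
  have := (Polynomial.card_le_degree_of_subset_roots hsub).trans hdeg
  omega

variable {V : Type} [AddCommGroup V] [Module L V]

lemma artin (Φ : V →+ V) (hsemi : ∀ (c : L) (v : V), Φ (c • v) = c ^ p • Φ v)
    {ι : Type} [Fintype ι] (f : ι → V) (hfix : ∀ i, Φ (f i) = f i)
    (hind : ∀ g : ι → ZMod p, ∑ i, (g i).val • f i = 0 → g = 0) :
    LinearIndependent L f := by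
  classical
  rw [Fintype.linearIndependent_iff]
  suffices H : ∀ n (g : ι → L), (Finset.univ.filter (g · ≠ 0)).card ≤ n →
      ∑ i, g i • f i = 0 → ∀ i, g i = 0 by
    intro g hg
    exact H _ g le_rfl hg
  intro n
  induction n with
  | zero =>
    intro g hcard _ i
    by_contra hi
    have : i ∈ Finset.univ.filter (g · ≠ 0) := by simp [hi]
    have := Finset.card_pos.mpr ⟨i, this⟩
    omega
  | succ n ih =>
    intro g hcard hrel i
    by_cases hle : (Finset.univ.filter (g · ≠ 0)).card ≤ n
    · exact ih g hle hrel i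
    -- the support is nonempty; derive a contradiction
    exfalso
    have hpos : 0 < (Finset.univ.filter (g · ≠ 0)).card := by omega
    obtain ⟨j, hj⟩ := Finset.card_pos.mp hpos
    have hgj : g j ≠ 0 := (Finset.mem_filter.mp hj).2
    set g1 : ι → L := fun i => (g j)⁻¹ * g i with hg1
    have hrel1 : ∑ i, g1 i • f i = 0 := by
      have : ∑ i, g1 i • f i = (g j)⁻¹ • ∑ i, g i • f i := by
        rw [Finset.smul_sum]
        exact Finset.sum_congr rfl fun i _ => by rw [hg1, mul_smul]
      rw [this, hrel, smul_zero]
    have hg1j : g1 j = 1 := by rw [hg1]; exact inv_mul_cancel₀ hgj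
    set h : ι → L := fun i => g1 i ^ p - g1 i with hh
    have hrelh : ∑ i, h i • f i = 0 := by
      have h1 : ∑ i, g1 i ^ p • f i = 0 := by
        have : ∀ i, g1 i ^ p • f i = Φ (g1 i • f i) := fun i => by
          rw [hsemi, hfix]
        simp_rw [this]
        rw [← map_sum, hrel1, map_zero]
      calc ∑ i, h i • f i = ∑ i, (g1 i ^ p • f i - g1 i • f i) := by
            refine Finset.sum_congr rfl fun i _ => ?_
            rw [hh, sub_smul]
          _ = 0 := by rw [Finset.sum_sub_distrib, h1, hrel1, sub_zero]
    have hsupph : (Finset.univ.filter (h · ≠ 0)).card ≤ n := by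
      have hss : Finset.univ.filter (h · ≠ 0) ⊆ (Finset.univ.filter (g · ≠ 0)).erase j := by
        intro i hi
        simp only [Finset.mem_filter, Finset.mem_univ, true_and] at hi
        refine Finset.mem_erase.mpr ⟨?_, Finset.mem_filter.mpr ⟨Finset.mem_univ _, ?_⟩⟩
        · rintro rfl
          apply hi
          rw [hh]
          simp [hg1j]
        · intro hgi
          apply hi
          rw [hh, hg1]
          simp [hgi, zero_pow (Fact.out : p.Prime).ne_zero]
      have := Finset.card_le_card hss
      have := Finset.card_erase_of_mem hj
      omega
    have hfixc : ∀ i, g1 i ^ p = g1 i := by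
      intro i
      have := ih h hsupph hrelh i
      rw [hh] at this
      exact sub_eq_zero.mp this
    choose c hc using fun i => fixed_of_pow_eq (g1 i) (hfixc i)
    have : c = 0 := by
      apply hind
      have : ∀ i, (c i).val • f i = g1 i • f i := fun i => by
        rw [← hc i, Nat.cast_smul_eq_nsmul]
      simp_rw [this]
      exact hrel1
    have : g1 j = 0 := by
      rw [← hc j, this]
      simp
    rw [hg1j] at this
    exact one_ne_zero this

end Aux

theorem stmt14 {p : ℕ} [Fact p.Prime] {L : Type} [Field L] [CharP L p]
    {V : Type} [AddCommGroup V] [Module L V] (d : ℕ) [Module.Finite L V]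
    (hdim : Module.finrank L V = d)
    (O : ValuationSubring L)
    -- `Φ = A·φ` is a bijective Frobenius-semilinear endomorphism of `V ≅ L^d`
    (Φ : V →+ V) (hΦbij : Function.Bijective Φ)
    (hsemi : ∀ (c : L) (v : V), Φ (c • v) = c ^ p • Φ v)
    -- the fixed points `U` form a `d`-dimensional vector space over the prime field `𝔽_p`
    (hU : Nat.card {v : V // Φ v = v} = p ^ d) :
    -- `𝔐₀ = O_L·U` is a finitely generated `O_L`-lattice in `V` ...
    (Submodule.span (↥O) {v : V | Φ v = v}).FG ∧
      Submodule.span L ((Submodule.span (↥O) {v : V | Φ v = v} : Submodule ↥O V) : Set V) = ⊤ ∧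
      -- ... whose image under `Φ` spans it back, i.e. `𝔐₀` is `Φ`-stable with spanning image
      Submodule.span (↥O) (Φ '' (Submodule.span (↥O) {v : V | Φ v = v} : Set V)) =
        Submodule.span (↥O) {v : V | Φ v = v} := by
  classical
  have hp : p.Prime := Fact.out
  -- write `p` as a successor so that `ZMod p`-module structures reduce
  obtain ⟨P, rfl⟩ : ∃ P, p = P + 1 := ⟨p - 1, by have := hp.two_le; omega⟩
  set p : ℕ := P + 1 with hpdef
  set S : Set V := {v : V | Φ v = v} with hS
  have hOsmul : ∀ (a : ↥O) (v : V), a • v = (a : L) • v := fun a v => rfl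
  -- a subgroup structure on the fixed points
  let A : AddSubgroup V :=
    { carrier := S
      add_mem' := fun {a b} ha hb => by
        simp only [hS, Set.mem_setOf_eq] at *
        rw [map_add, ha, hb]
      zero_mem' := by simp [hS]
      neg_mem' := fun {a} ha => by
        simp only [hS, Set.mem_setOf_eq] at *
        rw [map_neg, ha] }
  have hfinT : Finite {v : V // Φ v = v} :=
    Nat.finite_of_card_ne_zero (by rw [hU]; exact (pow_pos hp.pos d).ne')
  haveI : Finite A := hfinT
  have hSfin : S.Finite := Set.finite_coe_iff.mp hfinT
  refine ⟨Submodule.fg_span hSfin, ?_, ?_⟩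
  · -- the span over L is everything
    letI : Module (ZMod p) A := AddCommGroup.zmodModule (by
      intro x
      have h0 : ((p • x : A) : V) = 0 := by
        push_cast
        rw [← Nat.cast_smul_eq_nsmul L p (x : V), CharP.cast_eq_zero, zero_smul]
      exact Subtype.coe_injective (by simpa using h0))
    haveI : Fintype A := Fintype.ofFinite A
    haveI : Module.Finite (ZMod p) A := Module.Finite.of_finite
    have hcardA : Fintype.card A = p ^ d := by
      rw [← Nat.card_eq_fintype_card]
      exact hU
    have hfr : Module.finrank (ZMod p) A = d := by
      have h1 : Fintype.card A = Fintype.card (ZMod p) ^ Module.finrank (ZMod p) A :=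
        Module.card_eq_pow_finrank
      rw [ZMod.card, hcardA] at h1
      exact (Nat.pow_right_injective hp.two_le h1.symm)
    let b : Module.Basis (Fin d) (ZMod p) A := Module.finBasisOfFinrankEq (ZMod p) A hfr
    set f : Fin d → V := fun i => (b i : V) with hf
    have hfix : ∀ i, Φ (f i) = f i := fun i => (b i).2
    have hLI : LinearIndependent L f := by
      refine artin Φ hsemi f hfix ?_
      intro g hg
      have hcoe : ((∑ i, (g i).val • b i : A) : V) = ∑ i, (g i).val • f i := by
        calc ((∑ i, (g i).val • b i : A) : V) = A.subtype (∑ i, (g i).val • b i) := rfl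
          _ = ∑ i, A.subtype ((g i).val • b i) := map_sum _ _ _
          _ = ∑ i, (g i).val • f i := Finset.sum_congr rfl fun i _ => by
              rw [AddMonoidHom.map_nsmul]; rfl
      have hzero : (∑ i, (g i).val • b i : A) = 0 := by
        apply Subtype.coe_injective
        show ((∑ i, (g i).val • b i : A) : V) = ((0 : A) : V)
        rw [hcoe, hg, ZeroMemClass.coe_zero]
      have hconv : ∀ i, ((g i).val : ℕ) • b i = g i • b i := by
        intro i
        rw [← Nat.cast_smul_eq_nsmul (ZMod p) (g i).val (b i), ZMod.natCast_val, ZMod.cast_id]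
      rw [Finset.sum_congr rfl fun i _ => hconv i] at hzero
      exact funext (Fintype.linearIndependent_iff.mp b.linearIndependent g hzero)
    haveI : FiniteDimensional L V := ‹Module.Finite L V›
    rcases Nat.eq_zero_or_pos d with hd0 | hdpos
    · -- trivial case: `V` is the zero space
      haveI : Subsingleton V := by
        rw [← Module.finrank_zero_iff (R := L), hdim, hd0]
      refine eq_top_iff.mpr fun x _ => ?_
      rw [Subsingleton.elim x 0]
      exact Submodule.zero_mem _
    · haveI : Nonempty (Fin d) := ⟨⟨0, hdpos⟩⟩
      have hcardfin : Fintype.card (Fin d) = Module.finrank L V := by simp [hdim]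
      have hb2 := (basisOfLinearIndependentOfCardEqFinrank hLI hcardfin).span_eq
      rw [coe_basisOfLinearIndependentOfCardEqFinrank] at hb2
      refine eq_top_iff.mpr ?_
      rw [← hb2]
      refine Submodule.span_le.mpr ?_
      rintro _ ⟨i, rfl⟩
      exact Submodule.subset_span (Submodule.subset_span ((b i).2 : f i ∈ S))
  · -- Φ-stability
    refine le_antisymm (Submodule.span_le.mpr ?_) (Submodule.span_le.mpr ?_)
    · rintro _ ⟨x, hx, rfl⟩
      induction hx using Submodule.span_induction with
      | mem u hu => exact Submodule.subset_span (show Φ u ∈ S by rw [(hu : Φ u = u)]; exact hu)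
      | zero => rw [map_zero]; exact Submodule.zero_mem _
      | add x y _ _ hx hy => rw [map_add]; exact Submodule.add_mem _ hx hy
      | smul a x _ hx =>
        rw [hOsmul, hsemi]
        have h2 : ((a : L)) ^ p • Φ x = (a ^ p : ↥O) • Φ x := by
          rw [hOsmul]
          norm_cast
        rw [h2]
        exact Submodule.smul_mem _ _ hx
    · intro u hu
      refine Submodule.subset_span ?_
      exact ⟨u, Submodule.subset_span hu, (hu : Φ u = u)⟩
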